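/- Let E be a complete separable metric space, μ a fully supported Borel probability measure on E, and X = E^ℕ the product space with the metric d(x,y) = Σ_{n=1}^∞ 2^{-n} min(d_E(x_n,y_n),1). For a ∈ E and x ∈ X write a·x = (a, x_1, x_2, …). Let f : X → ℝ be bounded continuous and let the Ruelle transfer operator be L_f φ(x) = ∫_E e^{f(a·x)} φ(a·x) dμ(a). Then every conformal measure of L_f is fully supported: if ν is a Borel probability measure on X and ϱ > 0 satisfy ∫_X L_f φ dν = ϱ ∫_X φ dν for every bounded measurable φ, then ν(U) > 0 for every nonempty open set U ⊆ X. -/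

import Mathlib

open MeasureTheory

/-- Prepending a symbol to a sequence. -/
def consSeq {E : Type*} (a : E) (x : ℕ → E) : ℕ → E :=
  fun n => match n with
  | 0 => a
  | k + 1 => x k

/-- Finite cylinder sets. -/
def Cyl {E : Type*} (V : ℕ → Set E) (n : ℕ) : Set (ℕ → E) :=
  {x | ∀ i < n, x i ∈ V i}

lemma measurable_consSeq_uncurried {E : Type*} [MeasurableSpace E] :
    Measurable (fun p : (ℕ → E) × E => consSeq p.2 p.1) := by
  apply measurable_pi_lambda
  intro n
  match n with
  | 0 => exact measurable_snd
  | k + 1 => exact (measurable_pi_apply k).comp measurable_fst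

lemma measurable_consSeq_left {E : Type*} [MeasurableSpace E] (x : ℕ → E) :
    Measurable (fun a : E => consSeq a x) := by
  apply measurable_pi_lambda
  intro n
  match n with
  | 0 => exact measurable_id
  | k + 1 => exact measurable_const

lemma measurableSet_Cyl {E : Type*} [MeasurableSpace E] {V : ℕ → Set E} (n : ℕ)
    (hV : ∀ i, MeasurableSet (V i)) : MeasurableSet (Cyl V n) := by
  have : Cyl V n = ⋂ (i : ℕ) (_ : i < n), (fun x : ℕ → E => x i) ⁻¹' V i := by
    ext x; simp [Cyl]
  rw [this]
  exact MeasurableSet.iInter fun i => MeasurableSet.iInter fun _ =>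
    (measurable_pi_apply i) (hV i)

/-- Every conformal measure of the standard Ruelle operator with a fully
supported a priori measure is fully supported. -/
theorem stmt_2
    {E : Type*} [MetricSpace E] [CompleteSpace E]
    [TopologicalSpace.SeparableSpace E]
    [MeasurableSpace E] [BorelSpace E]
    (μ : Measure E) [IsProbabilityMeasure μ]
    (hμfull : ∀ V : Set E, IsOpen V → V.Nonempty → 0 < μ V)
    (f : (ℕ → E) → ℝ) (hfc : Continuous f) (hfb : ∃ M, ∀ x, |f x| ≤ M)
    (L : ((ℕ → E) → ℝ) → ((ℕ → E) → ℝ))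
    (hL : ∀ φ x, L φ x = ∫ a, Real.exp (f (consSeq a x)) * φ (consSeq a x) ∂μ)
    (ν : Measure (ℕ → E)) [IsProbabilityMeasure ν]
    (ϱ : ℝ) (hϱ : 0 < ϱ)
    (hconf : ∀ φ : (ℕ → E) → ℝ, Measurable φ → (∃ M, ∀ x, |φ x| ≤ M) →
      ∫ x, L φ x ∂ν = ϱ * ∫ x, φ x ∂ν) :
    ∀ U : Set (ℕ → E), IsOpen U → U.Nonempty → 0 < ν U := by
  obtain ⟨M, hM⟩ := hfb
  -- Key step: every cylinder over nonempty open sets has positive measure.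
  have key : ∀ (n : ℕ) (V : ℕ → Set E), (∀ i, IsOpen (V i)) → (∀ i, (V i).Nonempty) →
      0 < ν (Cyl V n) := by
    intro n
    induction n with
    | zero =>
      intro V _ _
      have : Cyl V 0 = Set.univ := by
        ext x; simp [Cyl]
      rw [this, measure_univ]
      exact one_pos
    | succ n ih =>
      intro V hVopen hVne
      set V' : ℕ → Set E := fun i => V (i + 1) with hV'
      have hC'pos : 0 < ν (Cyl V' n) := ih V' (fun i => hVopen (i + 1)) (fun i => hVne (i + 1))
      have hVmeas : ∀ i, MeasurableSet (V i) := fun i => (hVopen i).measurableSet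
      have hCmeas : MeasurableSet (Cyl V (n + 1)) := measurableSet_Cyl _ hVmeas
      have hC'meas : MeasurableSet (Cyl V' n) :=
        measurableSet_Cyl _ (fun i => hVmeas (i + 1))
      set φ : (ℕ → E) → ℝ := (Cyl V (n + 1)).indicator (1 : (ℕ → E) → ℝ) with hφ
      have hφmeas : Measurable φ := measurable_const.indicator hCmeas
      have hφbdd : ∀ x, |φ x| ≤ 1 := by
        intro x
        rw [hφ]
        by_cases hx : x ∈ Cyl V (n + 1) <;> simp [hx]
      -- membership characterization
      have hmem : ∀ (a : E) (x : ℕ → E),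
          consSeq a x ∈ Cyl V (n + 1) ↔ a ∈ V 0 ∧ x ∈ Cyl V' n := by
        intro a x
        constructor
        · intro h
          exact ⟨h 0 (Nat.succ_pos n), fun i hi => h (i + 1) (Nat.succ_lt_succ hi)⟩
        · rintro ⟨h0, h1⟩ i hi
          match i with
          | 0 => exact h0
          | k + 1 => exact h1 k (Nat.lt_of_succ_lt_succ hi)
      set c : ℝ := Real.exp (-M) * (μ (V 0)).toReal with hc
      have hcpos : 0 < c := by
        apply mul_pos (Real.exp_pos _)
        exact ENNReal.toReal_pos (hμfull (V 0) (hVopen 0) (hVne 0)).ne'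
          (measure_ne_top μ (V 0))
      -- pointwise integrand bounds
      have hInteg : ∀ x : ℕ → E,
          Integrable (fun a => Real.exp (f (consSeq a x)) * φ (consSeq a x)) μ := by
        intro x
        have hmeas : Measurable fun a => Real.exp (f (consSeq a x)) * φ (consSeq a x) := by
          have h1 : Measurable fun a : E => consSeq a x := measurable_consSeq_left x
          exact ((hfc.measurable.comp h1).exp).mul (hφmeas.comp h1)
        refine ⟨hmeas.aestronglyMeasurable, HasFiniteIntegral.of_bounded
          (C := Real.exp M) (ae_of_all _ fun a => ?_)⟩
        have h1 : Real.exp (f (consSeq a x)) ≤ Real.exp M :=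
          Real.exp_le_exp.mpr ((abs_le.mp (hM _)).2)
        have h2 : |φ (consSeq a x)| ≤ 1 := hφbdd _
        have h0 : (0:ℝ) ≤ Real.exp (f (consSeq a x)) * φ (consSeq a x) := by
          apply mul_nonneg (Real.exp_pos _).le
          rw [hφ]; exact Set.indicator_nonneg (fun _ _ => zero_le_one) _
        rw [Real.norm_eq_abs, abs_of_nonneg h0]
        calc Real.exp (f (consSeq a x)) * φ (consSeq a x)
            ≤ Real.exp (f (consSeq a x)) * 1 := by
              apply mul_le_mul_of_nonneg_left _ (Real.exp_pos _).le
              exact (abs_le.mp h2).2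
          _ ≤ Real.exp M := by rw [mul_one]; exact h1
      -- lower bound: L φ ≥ c on Cyl V' n, and L φ ≥ 0 everywhere
      have hLlb : ∀ x : ℕ → E,
          (Cyl V' n).indicator (fun _ => c) x ≤ L φ x := by
        intro x
        rw [hL]
        by_cases hx : x ∈ Cyl V' n
        · rw [Set.indicator_of_mem hx]
          have hle : ∀ a : E, (V 0).indicator (fun _ => Real.exp (-M)) a ≤
              Real.exp (f (consSeq a x)) * φ (consSeq a x) := by
            intro a
            by_cases ha : a ∈ V 0
            · rw [Set.indicator_of_mem ha]
              have hφ1 : φ (consSeq a x) = 1 := by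
                rw [hφ, Set.indicator_of_mem ((hmem a x).mpr ⟨ha, hx⟩)]; rfl
              rw [hφ1, mul_one]
              exact Real.exp_le_exp.mpr ((abs_le.mp (hM _)).1)
            · rw [Set.indicator_of_notMem ha]
              apply mul_nonneg (Real.exp_pos _).le
              rw [hφ]; exact Set.indicator_nonneg (fun _ _ => zero_le_one) _
          calc c = ∫ a, (V 0).indicator (fun _ => Real.exp (-M)) a ∂μ := by
                rw [integral_indicator_const _ (hVmeas 0), smul_eq_mul, hc, mul_comm]; rfl
            _ ≤ ∫ a, Real.exp (f (consSeq a x)) * φ (consSeq a x) ∂μ :=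
                integral_mono ((integrable_const _).indicator (hVmeas 0)) (hInteg x) hle
        · rw [Set.indicator_of_notMem hx]
          apply integral_nonneg
          intro a
          apply mul_nonneg (Real.exp_pos _).le
          rw [hφ]; exact Set.indicator_nonneg (fun _ _ => zero_le_one) _
      -- L φ is integrable w.r.t. ν
      have hLφmeas : StronglyMeasurable (L φ) := by
        have hF : StronglyMeasurable fun p : (ℕ → E) × E =>
            Real.exp (f (consSeq p.2 p.1)) * φ (consSeq p.2 p.1) := by
          have h1 : Measurable fun p : (ℕ → E) × E => consSeq p.2 p.1 :=
            measurable_consSeq_uncurried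
          exact (((hfc.measurable.comp h1).exp).mul (hφmeas.comp h1)).stronglyMeasurable
        have := hF.integral_prod_right' (ν := μ)
        have heq : (fun x => ∫ a, Real.exp (f (consSeq a x)) * φ (consSeq a x) ∂μ) = L φ := by
          ext x; rw [hL]
        rw [← heq]
        exact this
      have hLφint : Integrable (L φ) ν := by
        refine ⟨hLφmeas.aestronglyMeasurable, HasFiniteIntegral.of_bounded
          (C := Real.exp M) (ae_of_all _ fun x => ?_)⟩
        rw [hL]
        calc ‖∫ a, Real.exp (f (consSeq a x)) * φ (consSeq a x) ∂μ‖
            ≤ ∫ a, ‖Real.exp (f (consSeq a x)) * φ (consSeq a x)‖ ∂μ :=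
              norm_integral_le_integral_norm _
          _ ≤ ∫ _a, Real.exp M ∂μ := by
              apply integral_mono (hInteg x).norm (integrable_const _)
              intro a
              simp only [norm_mul, Real.norm_eq_abs, Real.abs_exp]
              calc Real.exp (f (consSeq a x)) * |φ (consSeq a x)|
                  ≤ Real.exp M * 1 :=
                    mul_le_mul (Real.exp_le_exp.mpr (abs_le.mp (hM _)).2)
                      (hφbdd _) (abs_nonneg _) (Real.exp_pos _).le
                _ = Real.exp M := mul_one _
          _ = Real.exp M := by simp
      -- put everything together
      have hineq : c * (ν (Cyl V' n)).toReal ≤ ϱ * (ν (Cyl V (n + 1))).toReal := by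
        calc c * (ν (Cyl V' n)).toReal
            = ∫ x, (Cyl V' n).indicator (fun _ => c) x ∂ν := by
              rw [integral_indicator_const _ hC'meas, smul_eq_mul, mul_comm]; rfl
          _ ≤ ∫ x, L φ x ∂ν :=
              integral_mono ((integrable_const _).indicator hC'meas) hLφint hLlb
          _ = ϱ * ∫ x, φ x ∂ν := hconf φ hφmeas ⟨1, hφbdd⟩
          _ = ϱ * (ν (Cyl V (n + 1))).toReal := by
              rw [hφ, integral_indicator_one hCmeas]; rfl
      have hlhs : 0 < c * (ν (Cyl V' n)).toReal :=
        mul_pos hcpos (ENNReal.toReal_pos hC'pos.ne' (measure_ne_top ν _))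
      have : 0 < (ν (Cyl V (n + 1))).toReal := by
        by_contra h
        push_neg at h
        nlinarith
      exact ENNReal.toReal_pos_iff.mp this |>.1
  -- now deduce the result for arbitrary nonempty open sets
  intro U hU hUne
  obtain ⟨x₀, hx₀⟩ := hUne
  obtain ⟨I, u, hIu, hsub⟩ := (isOpen_pi_iff.mp hU) x₀ hx₀
  set n : ℕ := I.sup id + 1 with hn
  set V : ℕ → Set E := fun i => if i ∈ I then u i else Set.univ with hV
  have hVopen : ∀ i, IsOpen (V i) := by
    intro i
    rw [hV]
    by_cases hi : i ∈ I
    · simp only [hi, if_true]; exact (hIu i hi).1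
    · simp only [hi, if_false]; exact isOpen_univ
  have hVne : ∀ i, (V i).Nonempty := by
    intro i
    rw [hV]
    by_cases hi : i ∈ I
    · simp only [hi, if_true]; exact ⟨x₀ i, (hIu i hi).2⟩
    · simp only [hi, if_false]; exact ⟨x₀ 0, trivial⟩
  have hCsub : Cyl V n ⊆ U := by
    intro x hx
    apply hsub
    intro i hi
    have hi' : i ∈ I := hi
    have hilt : i < n := by
      rw [hn]
      exact Nat.lt_succ_of_le (Finset.le_sup (f := id) hi')
    have := hx i hilt
    have hVi : V i = u i := by rw [hV]; simp [hi']
    rwa [hVi] at this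
  exact lt_of_lt_of_le (key n V hVopen hVne) (measure_mono hCsub)
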